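/- For probability vectors p, q on m points with p in the interior of the simplex, and any ξ ∈ ℝ^m, let p̃ = argmin_{u ∈ 𝒫} {ξ'(u − p) + V(p, u)} where V is the KL divergence. Then V(p̃, q) ≤ V(p, q) + ξ'(q − p) + ‖ξ‖²_∞ / 2. -/

import Mathlib

open scoped BigOperators

/-- Equality case of Gibbs' inequality, pointwise form. -/
lemma aux14_nonneg {a x : ℝ} (ha : 0 < a) (hx : 0 ≤ x) :
    0 ≤ x * Real.log (x / a) - x + a := by
  rcases hx.eq_or_lt with h0 | h0
  · simp [← h0, ha.le]
  · have hlog : Real.log (a / x) ≤ a / x - 1 := Real.log_le_sub_one_of_pos (by positivity)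
    have hd : Real.log (a / x) = - Real.log (x / a) := by
      rw [Real.log_div ha.ne' h0.ne', Real.log_div h0.ne' ha.ne']; ring
    rw [hd] at hlog
    have := mul_le_mul_of_nonneg_left hlog h0.le
    have hx' : x * (a / x - 1) = a - x := by field_simp
    nlinarith

lemma aux14_eq {a x : ℝ} (ha : 0 < a) (hx : 0 ≤ x)
    (h : x * Real.log (x / a) - x + a ≤ 0) : x = a := by
  rcases hx.eq_or_lt with h0 | h0
  · exfalso; rw [← h0] at h; simp at h; linarith
  · by_contra hne
    have hne' : a / x ≠ 1 := by
      intro hc; exact hne ((div_eq_one_iff_eq h0.ne').mp hc).symm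
    have hlog : Real.log (a / x) < a / x - 1 :=
      Real.log_lt_sub_one_of_pos (by positivity) hne'
    have hd : Real.log (a / x) = - Real.log (x / a) := by
      rw [Real.log_div ha.ne' h0.ne', Real.log_div h0.ne' ha.ne']; ring
    rw [hd] at hlog
    have := mul_lt_mul_of_pos_left hlog h0
    have hx' : x * (a / x - 1) = a - x := by field_simp
    nlinarith

/-- Hoeffding's lemma (finite form): `log Σ pᵢ e^{-ξᵢ} + Σ pᵢ ξᵢ ≤ B²/2` when `|ξᵢ| ≤ B`. -/
lemma aux14_hoeffding {m : ℕ} (hm : 0 < m) (p ξ : Fin m → ℝ)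
    (hp : ∀ i, 0 < p i) (hp1 : ∑ i, p i = 1) (B : ℝ) (hB : ∀ i, |ξ i| ≤ B) :
    Real.log (∑ i, p i * Real.exp (-ξ i)) + ∑ i, p i * ξ i ≤ B ^ 2 / 2 := by
  have hne : (Finset.univ : Finset (Fin m)).Nonempty :=
    Finset.univ_nonempty_iff.mpr (Fin.pos_iff_nonempty.mp hm)
  set μ : ℝ := ∑ i, p i * ξ i with hμ
  set Z : ℝ → ℝ := fun t => ∑ i, p i * Real.exp (-(t * ξ i)) with hZdef
  set A : ℝ → ℝ := fun t => ∑ i, p i * -ξ i * Real.exp (-(t * ξ i)) with hAdef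
  set C : ℝ → ℝ := fun t => ∑ i, p i * ξ i ^ 2 * Real.exp (-(t * ξ i)) with hCdef
  have hZpos : ∀ t, 0 < Z t := fun t =>
    Finset.sum_pos (fun i _ => mul_pos (hp i) (Real.exp_pos _)) hne
  have hexp : ∀ (c : ℝ) (i : Fin m) (t : ℝ),
      HasDerivAt (fun s : ℝ => c * Real.exp (-(s * ξ i)))
        (c * -ξ i * Real.exp (-(t * ξ i))) t := by
    intro c i t
    have h1 : HasDerivAt (fun s : ℝ => -(s * ξ i)) (-ξ i) t :=
      (hasDerivAt_mul_const (ξ i)).neg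
    have h2 := (h1.exp).const_mul c
    exact h2.congr_deriv (by ring)
  have hZ : ∀ t, HasDerivAt Z (A t) t := by
    intro t
    exact HasDerivAt.fun_sum fun i _ => hexp (p i) i t
  have hA : ∀ t, HasDerivAt A (C t) t := by
    intro t
    have := HasDerivAt.fun_sum fun i (_ : i ∈ Finset.univ) => hexp (p i * -ξ i) i t
    exact this.congr_deriv (Finset.sum_congr rfl fun i _ => by ring)
  have hB0 : 0 ≤ B := (abs_nonneg _).trans (hB ⟨0, hm⟩)
  have hCle : ∀ t, C t ≤ B ^ 2 * Z t := by
    intro t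
    rw [Finset.mul_sum]
    apply Finset.sum_le_sum
    intro i _
    have hξ2 : ξ i ^ 2 ≤ B ^ 2 := by
      have := hB i; nlinarith [abs_nonneg (ξ i), sq_abs (ξ i)]
    have he : 0 < Real.exp (-(t * ξ i)) := Real.exp_pos _
    nlinarith [(hp i).le, mul_le_mul_of_nonneg_left hξ2 (hp i).le]
  -- u t = B^2 t - (A t / Z t + μ) is monotone on ℝ
  set u : ℝ → ℝ := fun t => B ^ 2 * t - (A t / Z t + μ) with hudef
  have hu' : ∀ t, HasDerivAt u
      (B ^ 2 - ((C t * Z t - A t * A t) / Z t ^ 2 + 0)) t := by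
    intro t
    have h1 : HasDerivAt (fun s : ℝ => B ^ 2 * s) (B ^ 2) t := by
      simpa [mul_comm] using (hasDerivAt_mul_const (B ^ 2))
    have h2 : HasDerivAt (fun s => A s / Z s)
        ((C t * Z t - A t * A t) / Z t ^ 2) t :=
      (hA t).div (hZ t) (hZpos t).ne'
    simpa using h1.fun_sub (h2.add_const μ)
  have huderiv : ∀ t, 0 ≤ B ^ 2 - ((C t * Z t - A t * A t) / Z t ^ 2 + 0) := by
    intro t
    have hz := hZpos t
    have h1 : (C t * Z t - A t * A t) / Z t ^ 2 ≤ B ^ 2 := by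
      rw [div_le_iff₀ (by positivity)]
      nlinarith [hCle t, mul_le_mul_of_nonneg_right (hCle t) hz.le, sq_nonneg (A t)]
    linarith
  have humono : Monotone u :=
    monotone_of_hasDerivAt_nonneg hu' huderiv
  have hA0 : A 0 = -μ := by
    rw [hAdef, hμ, ← Finset.sum_neg_distrib]
    apply Finset.sum_congr rfl
    intro i _
    simp [mul_comm]
  have hZ0 : Z 0 = 1 := by simp [hZdef, hp1]
  have hu0 : u 0 = 0 := by simp [hudef, hA0, hZ0]
  have hule : ∀ t, 0 ≤ t → A t / Z t + μ ≤ B ^ 2 * t := by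
    intro t ht
    have := humono ht
    rw [hu0] at this
    simpa [hudef, sub_nonneg] using this
  -- G t = B^2 t^2/2 - (log (Z t) + t μ)
  set G : ℝ → ℝ := fun t => B ^ 2 * t ^ 2 / 2 - (Real.log (Z t) + t * μ) with hGdef
  have hG' : ∀ t, HasDerivAt G (B ^ 2 * t - (A t / Z t + μ)) t := by
    intro t
    have h1 : HasDerivAt (fun s : ℝ => B ^ 2 * s ^ 2 / 2) (B ^ 2 * t) t := by
      have := ((hasDerivAt_pow 2 t).const_mul (B ^ 2)).div_const 2
      exact this.congr_deriv (by ring)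
    have h2 : HasDerivAt (fun s => Real.log (Z s)) (A t / Z t) t :=
      (hZ t).log (hZpos t).ne'
    exact h1.sub (h2.add (hasDerivAt_mul_const μ))
  have hGmono : MonotoneOn G (Set.Icc (0:ℝ) 1) := by
    apply monotoneOn_of_hasDerivWithinAt_nonneg (convex_Icc 0 1)
      (f' := fun t => B ^ 2 * t - (A t / Z t + μ))
    · exact (Differentiable.continuous fun t => (hG' t).differentiableAt).continuousOn
    · exact fun x _ => (hG' x).hasDerivWithinAt
    · intro x hx
      rw [interior_Icc] at hx
      have := hule x hx.1.le
      linarith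
  have hG0 : G 0 = 0 := by simp [hGdef, hZ0]
  have hG1 := hGmono (Set.left_mem_Icc.mpr zero_le_one)
      (Set.right_mem_Icc.mpr zero_le_one) zero_le_one
  rw [hG0] at hG1
  have hZ1 : Z 1 = ∑ i, p i * Real.exp (-ξ i) := by simp [hZdef]
  simp only [hGdef, hZ1, one_pow, mul_one, one_mul] at hG1
  linarith

theorem stmt14 {m : ℕ} (hm : 0 < m) (p q ξ pt : Fin m → ℝ)
    (hp : ∀ i, 0 < p i) (hp1 : ∑ i, p i = 1)
    (hq0 : ∀ i, 0 ≤ q i) (hq1 : ∑ i, q i = 1)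
    (hpt0 : ∀ i, 0 ≤ pt i) (hpt1 : ∑ i, pt i = 1)
    (hmin : ∀ u : Fin m → ℝ, (∀ i, 0 ≤ u i) → (∑ i, u i = 1) →
      (∑ i, ξ i * (pt i - p i)) + (∑ i, pt i * Real.log (pt i / p i)) ≤
      (∑ i, ξ i * (u i - p i)) + ∑ i, u i * Real.log (u i / p i)) :
    (∑ i, q i * Real.log (q i / pt i)) ≤
      (∑ i, q i * Real.log (q i / p i)) + (∑ i, ξ i * (q i - p i)) +
        (Finset.univ.sup' (Finset.univ_nonempty_iff.mpr (Fin.pos_iff_nonempty.mp hm))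
          (fun i => |ξ i|)) ^ 2 / 2 := by
  have hne : (Finset.univ : Finset (Fin m)).Nonempty :=
    Finset.univ_nonempty_iff.mpr (Fin.pos_iff_nonempty.mp hm)
  set B : ℝ := Finset.univ.sup' hne (fun i => |ξ i|) with hBdef
  have hBabs : ∀ i, |ξ i| ≤ B := fun i => Finset.le_sup' (fun j => |ξ j|) (Finset.mem_univ i)
  set Z1 : ℝ := ∑ i, p i * Real.exp (-ξ i) with hZ1def
  have hZ1 : 0 < Z1 :=
    Finset.sum_pos (fun i _ => mul_pos (hp i) (Real.exp_pos _)) hne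
  set w : Fin m → ℝ := fun i => p i * Real.exp (-ξ i) / Z1 with hwdef
  have hw : ∀ i, 0 < w i := fun i =>
    div_pos (mul_pos (hp i) (Real.exp_pos _)) hZ1
  have hw1 : ∑ i, w i = 1 := by
    rw [hwdef, ← Finset.sum_div, ← hZ1def, div_self hZ1.ne']
  have hlogw : ∀ i, Real.log (w i) = Real.log (p i) - ξ i - Real.log Z1 := by
    intro i
    rw [hwdef]
    rw [Real.log_div (mul_pos (hp i) (Real.exp_pos _)).ne' hZ1.ne', Real.log_mul (hp i).ne' (Real.exp_ne_zero _),
      Real.log_exp]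
    ring
  -- apply minimality at w
  have hmw := hmin w (fun i => (hw i).le) hw1
  have hwlog : ∀ i, w i * Real.log (w i / p i) = w i * (-ξ i - Real.log Z1) := by
    intro i
    rw [Real.log_div (hw i).ne' (hp i).ne', hlogw i]
    ring
  have hsum_wlog : ∑ i, w i * Real.log (w i / p i)
      = -(∑ i, ξ i * w i) - Real.log Z1 := by
    rw [Finset.sum_congr rfl (fun i _ => hwlog i)]
    have : ∀ i, w i * (-ξ i - Real.log Z1) = -(ξ i * w i) - w i * Real.log Z1 := by
      intro i; ring
    rw [Finset.sum_congr rfl (fun i _ => this i), Finset.sum_sub_distrib,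
      ← Finset.sum_neg_distrib, ← Finset.sum_mul, hw1]
    ring
  have hsub : ∀ v : Fin m → ℝ, ∑ i, ξ i * (v i - p i) = (∑ i, ξ i * v i) - ∑ i, ξ i * p i := by
    intro v
    rw [← Finset.sum_sub_distrib]
    exact Finset.sum_congr rfl fun i _ => by ring
  rw [hsub pt, hsub w, hsum_wlog] at hmw
  have hkey : (∑ i, pt i * Real.log (pt i / p i)) + (∑ i, ξ i * pt i) + Real.log Z1 ≤ 0 := by
    linarith
  -- KL(pt ‖ w) ≤ 0
  have hterm : ∀ i, pt i * Real.log (pt i / w i)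
      = pt i * Real.log (pt i / p i) + ξ i * pt i + pt i * Real.log Z1 := by
    intro i
    rcases (hpt0 i).eq_or_lt with h0 | h0
    · simp [← h0]
    · rw [Real.log_div h0.ne' (hw i).ne', Real.log_div h0.ne' (hp i).ne', hlogw i]
      ring
  have hKL : ∑ i, pt i * Real.log (pt i / w i) ≤ 0 := by
    rw [Finset.sum_congr rfl (fun i _ => hterm i)]
    have h1 : ∑ i, (pt i * Real.log (pt i / p i) + ξ i * pt i + pt i * Real.log Z1)
        = (∑ i, pt i * Real.log (pt i / p i)) + (∑ i, ξ i * pt i)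
          + (∑ i, pt i) * Real.log Z1 := by
      rw [Finset.sum_add_distrib, Finset.sum_add_distrib, ← Finset.sum_mul]
    rw [h1, hpt1, one_mul]
    exact hkey
  have hsumT : ∑ i, (pt i * Real.log (pt i / w i) - pt i + w i) ≤ 0 := by
    rw [Finset.sum_add_distrib, Finset.sum_sub_distrib, hpt1, hw1]
    linarith
  have hTnn : ∀ i ∈ Finset.univ, 0 ≤ pt i * Real.log (pt i / w i) - pt i + w i :=
    fun i _ => aux14_nonneg (hw i) (hpt0 i)
  have hpteq : ∀ i, pt i = w i := by
    intro i
    apply aux14_eq (hw i) (hpt0 i)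
    have hle : pt i * Real.log (pt i / w i) - pt i + w i
        ≤ ∑ j, (pt j * Real.log (pt j / w j) - pt j + w j) :=
      Finset.single_le_sum hTnn (Finset.mem_univ i)
    linarith
  -- rewrite the goal
  have hqterm : ∀ i, q i * Real.log (q i / pt i)
      = q i * Real.log (q i / p i) + ξ i * q i + q i * Real.log Z1 := by
    intro i
    rcases (hq0 i).eq_or_lt with h0 | h0
    · simp [← h0]
    · rw [hpteq i, Real.log_div h0.ne' (hw i).ne', Real.log_div h0.ne' (hp i).ne', hlogw i]
      ring
  have hgoalL : ∑ i, q i * Real.log (q i / pt i)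
      = (∑ i, q i * Real.log (q i / p i)) + (∑ i, ξ i * q i) + Real.log Z1 := by
    rw [Finset.sum_congr rfl (fun i _ => hqterm i), Finset.sum_add_distrib,
      Finset.sum_add_distrib, ← Finset.sum_mul, hq1, one_mul]
  have hhoeff := aux14_hoeffding hm p ξ hp hp1 B hBabs
  have hpx : ∑ i, p i * ξ i = ∑ i, ξ i * p i :=
    Finset.sum_congr rfl fun i _ => mul_comm _ _
  rw [hgoalL, hsub q]
  rw [hpx] at hhoeff
  linarith
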